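/- Let ‖·‖ₖ (k ∈ ℕ) and ‖·‖ be norms on ℝⁿ with (1 − 1/k)‖x‖ₖ ≤ ‖x‖ ≤ (1 + 1/k)‖x‖ₖ for all x, and let a, b, c ∈ ℝⁿ. Suppose for each k there exists dₖ with ‖dₖ − a‖ₖ = ‖dₖ − b‖ₖ = ‖dₖ − c‖ₖ = 1. Then there exists d ∈ ℝⁿ with ‖d − a‖ = ‖d − b‖ = ‖d − c‖ = 1. -/

import Mathlib

def IsNorm {n : ℕ} (N : (Fin n → ℝ) → ℝ) : Prop :=
  (∀ x, 0 ≤ N x) ∧ (∀ x, N x = 0 ↔ x = 0) ∧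
    (∀ (a : ℝ) x, N (a • x) = |a| * N x) ∧ ∀ x y, N (x + y) ≤ N x + N y

lemma isNorm_zero {n : ℕ} {N : (Fin n → ℝ) → ℝ} (hN : IsNorm N) : N 0 = 0 :=
  (hN.2.1 0).2 rfl

lemma isNorm_le_mul {n : ℕ} {N : (Fin n → ℝ) → ℝ} (hN : IsNorm N) :
    ∃ C : ℝ, 0 ≤ C ∧ ∀ x, N x ≤ C * ‖x‖ := by
  obtain ⟨h0, heq, hsmul, hadd⟩ := hN
  refine ⟨∑ i, N (Pi.single i 1), Finset.sum_nonneg fun i _ => h0 _, fun x => ?_⟩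
  have hx : x = ∑ i, x i • (Pi.single i 1 : Fin n → ℝ) := by
    ext j; simp [Pi.single_apply]
  calc N x = N (∑ i, x i • (Pi.single i 1 : Fin n → ℝ)) := by rw [← hx]
    _ ≤ ∑ i, N (x i • (Pi.single i 1 : Fin n → ℝ)) :=
        Finset.le_sum_of_subadditive N ((heq 0).2 rfl).le hadd _ _
    _ ≤ ∑ i, ‖x‖ * N (Pi.single i 1 : Fin n → ℝ) := by
        refine Finset.sum_le_sum fun i _ => ?_
        rw [hsmul]
        exact mul_le_mul_of_nonneg_right
          (by simpa [Real.norm_eq_abs] using norm_le_pi_norm x i) (h0 _)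
    _ = (∑ i, N (Pi.single i 1 : Fin n → ℝ)) * ‖x‖ := by
        rw [← Finset.mul_sum, mul_comm]

lemma isNorm_continuous {n : ℕ} {N : (Fin n → ℝ) → ℝ} (hN : IsNorm N) :
    Continuous N := by
  obtain ⟨C, hC0, hC⟩ := isNorm_le_mul hN
  obtain ⟨h0, heq, hsmul, hadd⟩ := hN
  have habs : ∀ x y, |N x - N y| ≤ N (x - y) := by
    intro x y
    have h1 : N x - N y ≤ N (x - y) := by
      have := hadd (x - y) y; simp at this; linarith
    have h2 : N y - N x ≤ N (x - y) := by
      have := hadd (y - x) x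
      have hneg : N (y - x) = N (x - y) := by
        have := hsmul (-1) (x - y); simp at this
        simpa [neg_sub] using this
      simp at this; linarith [this, hneg.symm.le]
    exact abs_sub_le_iff.2 ⟨h1, h2⟩
  refine LipschitzWith.continuous (K := Real.toNNReal C) ?_
  refine LipschitzWith.of_dist_le_mul fun x y => ?_
  rw [Real.dist_eq, dist_eq_norm, Real.coe_toNNReal _ hC0]
  exact (habs x y).trans (hC _)

lemma isNorm_coercive {n : ℕ} {N : (Fin n → ℝ) → ℝ} (hN : IsNorm N) :
    ∃ m : ℝ, 0 < m ∧ ∀ x, m * ‖x‖ ≤ N x := by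
  rcases Nat.eq_zero_or_pos n with hn | hn
  · refine ⟨1, one_pos, fun x => ?_⟩
    subst hn
    have hx0 : x = 0 := funext fun i => i.elim0
    rw [hx0, norm_zero, isNorm_zero hN, mul_zero]
  · haveI : Nonempty (Fin n) := Fin.pos_iff_nonempty.mp hn
    haveI : Nontrivial (Fin n → ℝ) := inferInstance
    have hne : (Metric.sphere (0 : Fin n → ℝ) 1).Nonempty :=
      NormedSpace.sphere_nonempty.mpr zero_le_one
    obtain ⟨x0, hx0, hmin⟩ := (isCompact_sphere (0 : Fin n → ℝ) 1).exists_isMinOn hne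
      (isNorm_continuous hN).continuousOn
    have hx0n : ‖x0‖ = 1 := by simpa using hx0
    have hm : 0 < N x0 := by
      rcases lt_or_eq_of_le (hN.1 x0) with h | h
      · exact h
      · exfalso
        have : x0 = 0 := (hN.2.1 x0).1 h.symm
        rw [this] at hx0n; simp at hx0n
    refine ⟨N x0, hm, fun x => ?_⟩
    rcases eq_or_ne x 0 with rfl | hx
    · simp [isNorm_zero hN]
    · have hxn : ‖x‖ ≠ 0 := norm_ne_zero_iff.mpr hx
      have hmem : ‖x‖⁻¹ • x ∈ Metric.sphere (0 : Fin n → ℝ) 1 := by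
        simp [norm_smul, abs_of_nonneg (inv_nonneg.2 (norm_nonneg x)),
          inv_mul_cancel₀ hxn]
      have := hmin hmem
      have h2 : N (‖x‖⁻¹ • x) = ‖x‖⁻¹ * N x := by
        rw [hN.2.2.1, abs_of_nonneg (inv_nonneg.2 (norm_nonneg x))]
      have hle : N x0 ≤ ‖x‖⁻¹ * N x := h2 ▸ this
      have hxp : 0 < ‖x‖ := norm_pos_iff.mpr hx
      calc N x0 * ‖x‖ ≤ (‖x‖⁻¹ * N x) * ‖x‖ := by
            exact mul_le_mul_of_nonneg_right hle hxp.le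
        _ = N x := by field_simp

open Filter Topology in
theorem limit_of_equidistant_points (n : ℕ) (N : (Fin n → ℝ) → ℝ) (hN : IsNorm N)
    (Nk : ℕ → (Fin n → ℝ) → ℝ) (hNk : ∀ k, IsNorm (Nk k))
    (happrox : ∀ k : ℕ, 1 ≤ k → ∀ x,
      (1 - 1 / (k : ℝ)) * Nk k x ≤ N x ∧ N x ≤ (1 + 1 / (k : ℝ)) * Nk k x)
    (a b c : Fin n → ℝ)
    (hd : ∀ k : ℕ, 1 ≤ k → ∃ dk : Fin n → ℝ,
      Nk k (dk - a) = 1 ∧ Nk k (dk - b) = 1 ∧ Nk k (dk - c) = 1) :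
    ∃ d : Fin n → ℝ, N (d - a) = 1 ∧ N (d - b) = 1 ∧ N (d - c) = 1 := by
  -- choose the sequence
  have hk1 : ∀ k : ℕ, 1 ≤ k + 1 := fun k => Nat.le_add_left 1 k
  set f : ℕ → (Fin n → ℝ) := fun k => (hd (k + 1) (hk1 k)).choose with hf
  have hfa : ∀ k, Nk (k + 1) (f k - a) = 1 := fun k => (hd (k + 1) (hk1 k)).choose_spec.1
  have hfb : ∀ k, Nk (k + 1) (f k - b) = 1 := fun k => (hd (k + 1) (hk1 k)).choose_spec.2.1
  have hfc : ∀ k, Nk (k + 1) (f k - c) = 1 := fun k => (hd (k + 1) (hk1 k)).choose_spec.2.2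
  -- squeeze bounds
  have hbound : ∀ (p : Fin n → ℝ), (∀ k, Nk (k + 1) (f k - p) = 1) →
      ∀ k : ℕ, (1 - 1 / ((k : ℝ) + 1)) ≤ N (f k - p) ∧ N (f k - p) ≤ 1 + 1 / ((k : ℝ) + 1) := by
    intro p hp k
    have h := happrox (k + 1) (hk1 k) (f k - p)
    rw [hp k] at h
    push_cast at h
    simpa using h
  have hlim : Tendsto (fun k : ℕ => 1 - 1 / ((k : ℝ) + 1)) atTop (nhds 1) := by
    simpa using tendsto_const_nhds.sub (tendsto_one_div_add_atTop_nhds_zero_nat :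
      Tendsto (fun k : ℕ => 1 / ((k : ℝ) + 1)) atTop (𝓝 0))
  have hlim' : Tendsto (fun k : ℕ => 1 + 1 / ((k : ℝ) + 1)) atTop (nhds 1) := by
    simpa using tendsto_const_nhds.add (tendsto_one_div_add_atTop_nhds_zero_nat :
      Tendsto (fun k : ℕ => 1 / ((k : ℝ) + 1)) atTop (𝓝 0))
  have htend : ∀ (p : Fin n → ℝ), (∀ k, Nk (k + 1) (f k - p) = 1) →
      Tendsto (fun k => N (f k - p)) atTop (nhds 1) := fun p hp =>
    tendsto_of_tendsto_of_tendsto_of_le_of_le hlim hlim'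
      (fun k => (hbound p hp k).1) (fun k => (hbound p hp k).2)
  -- boundedness
  obtain ⟨m, hm, hcoer⟩ := isNorm_coercive hN
  have hmem : ∀ k, f k ∈ Metric.closedBall a (2 / m) := by
    intro k
    have h2 : N (f k - a) ≤ 2 := by
      have := (hbound a hfa k).2
      have hle : 1 / ((k : ℝ) + 1) ≤ 1 := by
        rw [div_le_one (by positivity)]; linarith [Nat.cast_nonneg (α := ℝ) k]
      linarith
    have := hcoer (f k - a)
    rw [Metric.mem_closedBall, dist_eq_norm]
    rw [le_div_iff₀ hm, mul_comm]
    linarith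
  obtain ⟨d, -, φ, hφ, hφtend⟩ :=
    tendsto_subseq_of_bounded Metric.isBounded_closedBall hmem
  refine ⟨d, ?_, ?_, ?_⟩ <;>
  [ (have hp := hfa); (have hp := hfb); (have hp := hfc)] <;>
  · refine tendsto_nhds_unique ?_ ((htend _ hp).comp hφ.tendsto_atTop)
    exact ((isNorm_continuous hN).tendsto _).comp (hφtend.sub tendsto_const_nhds)
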